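/- arXiv:math/9905051 — 2 statements merged into one kernel-verified Lean document; each statement's English description precedes it below -/
import Mathlib

section
/- Let n be a positive integer and let P_1, …, P_n ∈ ℂ[x_1, …, x_n] be homogeneous polynomials (P_i homogeneous of some degree d_i). Assume that the common zero set of P_1, …, P_n in ℂ^n contains a point different from the origin. Then the Jacobian J(P_1, …, P_n) belongs to the ideal of ℂ[x_1, …, x_n] generated by P_1, …, P_n. -/
open MvPolynomial Matrix

namespace JacobianProof

variable {n : ℕ}



private lemma sum_pderiv_monomial_mul_X (α : Fin n →₀ ℕ) (b : ℂ) :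
    ∑ l : Fin n, pderiv l (monomial α b) * X l = α.degree • monomial α b := by
  have step : ∀ l : Fin n, pderiv l (monomial α b) * X l = α l • monomial α b := by
    intro l
    rw [pderiv_monomial]
    by_cases h0 : α l = 0
    · simp [h0]
    · have hle : Finsupp.single l 1 ≤ α := by
        rw [Finsupp.single_le_iff]
        omega
      have hX : (X l : MvPolynomial (Fin n) ℂ) = monomial (Finsupp.single l 1) 1 := rfl
      rw [hX, monomial_mul, tsub_add_cancel_of_le hle, mul_one, ← _root_.map_nsmul (monomial α) (α l) b,
        nsmul_eq_mul, mul_comm]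
  rw [Finset.sum_congr rfl fun l _ => step l, ← Finset.sum_smul]
  congr 1
  rw [Finsupp.degree]
  exact (Finset.sum_subset (Finset.subset_univ _)
    (fun x _ hx => Finsupp.notMem_support_iff.mp hx)).symm

private lemma euler {φ : MvPolynomial (Fin n) ℂ} {dd : ℕ} (hφ : φ.IsHomogeneous dd) :
    ∑ l : Fin n, pderiv l φ * X l = dd • φ := by
  have h1 : ∑ l : Fin n, pderiv l φ * X l
      = ∑ α ∈ φ.support, ∑ l : Fin n, pderiv l (monomial α (coeff α φ)) * X l := by
    rw [Finset.sum_comm]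
    apply Finset.sum_congr rfl
    intro l _
    conv_lhs => rw [← support_sum_monomial_coeff φ]
    rw [_root_.map_sum, Finset.sum_mul]
  have h2 : ∀ α ∈ φ.support, ∑ l : Fin n, pderiv l (monomial α (coeff α φ)) * X l
      = dd • monomial α (coeff α φ) := by
    intro α hα
    rw [sum_pderiv_monomial_mul_X]
    congr 1
    have hw := hφ (mem_support_iff.mp hα)
    rw [Finsupp.degree_eq_weight_one]
    exact hw
  rw [h1, Finset.sum_congr rfl h2, ← Finset.smul_sum, support_sum_monomial_coeff]


private lemma hc_mul_X (p : MvPolynomial (Fin n) ℂ) (j : Fin n) (δ : ℕ) :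
    homogeneousComponent (δ + 1) (p * X j) = homogeneousComponent δ p * X j := by
  apply MvPolynomial.ext
  intro β
  simp only [coeff_homogeneousComponent, coeff_mul_X']
  by_cases hj : j ∈ β.support
  · simp only [if_pos hj]
    have hble : Finsupp.single j 1 ≤ β := by
      rw [Finsupp.single_le_iff]
      have := Finsupp.mem_support_iff.mp hj
      omega
    have hdeg : (β - Finsupp.single j 1).degree + 1 = β.degree := by
      have hadd : (β - Finsupp.single j 1) + Finsupp.single j 1 = β := tsub_add_cancel_of_le hble
      have h1 : (Finsupp.single j 1 : Fin n →₀ ℕ).degree = 1 := by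
        rw [Finsupp.degree_eq_weight_one]
        simp [Finsupp.weight_apply, Finsupp.sum_single_index]
      conv_rhs => rw [← hadd]
      rw [Finsupp.degree_eq_weight_one] at h1 ⊢
      rw [_root_.map_add, h1]
    rw [← hdeg]
    simp [add_left_inj]
  · simp [hj]

private lemma syzygy_decomp (v : Fin n → MvPolynomial (Fin n) ℂ)
    (hv : ∑ j, v j * X j = 0) :
    ∃ c : Fin n → Fin n → MvPolynomial (Fin n) ℂ,
      (∀ p q, c p q = - c q p) ∧ ∀ j, v j = ∑ p, c p j * X p := by
  classical
  set N := (Finset.univ.sup fun j => (v j).totalDegree) + 1 with hN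
  have hsum : ∀ j, ∑ δ ∈ Finset.range N, homogeneousComponent δ (v j) = v j := by
    intro j
    conv_rhs => rw [← sum_homogeneousComponent (v j)]
    apply (Finset.sum_subset ?_ ?_).symm
    · apply Finset.range_subset_range.mpr
      have : (v j).totalDegree ≤ Finset.univ.sup fun j => (v j).totalDegree :=
        Finset.le_sup (f := fun j => (v j).totalDegree) (Finset.mem_univ j)
      omega
    · intro δ _ hδ
      apply homogeneousComponent_eq_zero
      simp only [Finset.mem_range, not_lt] at hδ
      omega
  set w : ℕ → Fin n → MvPolynomial (Fin n) ℂ := fun δ j => homogeneousComponent δ (v j) with hw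
  have hwhom : ∀ δ j, (w δ j).IsHomogeneous δ := fun δ j => homogeneousComponent_isHomogeneous δ (v j)
  have hwsyz : ∀ δ, ∑ j, w δ j * X j = 0 := by
    intro δ
    have h1 : ∀ j ∈ Finset.univ, w δ j * X j = homogeneousComponent (δ + 1) (v j * X j) :=
      fun j _ => (hc_mul_X (v j) j δ).symm
    rw [Finset.sum_congr rfl h1, ← _root_.map_sum, hv, _root_.map_zero]
  set cδ : ℕ → Fin n → Fin n → MvPolynomial (Fin n) ℂ := fun δ p q =>
    (((δ : ℂ) + 1)⁻¹) • (pderiv p (w δ q) - pderiv q (w δ p)) with hcδ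
  have hrep : ∀ δ j, ∑ p, cδ δ p j * X p = w δ j := by
    intro δ j
    have h1 : ∑ p : Fin n, pderiv p (w δ j) * X p = δ • w δ j := euler (hwhom δ j)
    have h2 : ∑ p : Fin n, pderiv j (w δ p) * X p = - w δ j := by
      have h3 := congrArg (pderiv j) (hwsyz δ)
      rw [_root_.map_sum, _root_.map_zero] at h3
      have h4 : ∀ p ∈ Finset.univ, pderiv j (w δ p * X p)
          = pderiv j (w δ p) * X p + w δ p * pderiv j (X p) := fun p _ => pderiv_mul
      rw [Finset.sum_congr rfl h4, Finset.sum_add_distrib] at h3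
      have h5 : ∑ p : Fin n, w δ p * pderiv j (X p) = w δ j := by
        have h6 : ∀ p ∈ Finset.univ, w δ p * pderiv j (X p)
            = if p = j then w δ p else 0 := by
          intro p _
          by_cases hpj : p = j
          · subst hpj; simp
          · simp [Pi.single_eq_of_ne hpj, hpj]
        rw [Finset.sum_congr rfl h6, Finset.sum_ite_eq' Finset.univ j fun p => w δ p]
        simp
      rw [h5] at h3
      exact eq_neg_of_add_eq_zero_left h3
    have hsm : ∀ p ∈ Finset.univ, cδ δ p j * X p
        = (((δ : ℂ) + 1)⁻¹) • ((pderiv p (w δ j) - pderiv j (w δ p)) * X p) := by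
      intro p _
      rw [hcδ]
      rw [smul_mul_assoc]
    rw [Finset.sum_congr rfl hsm, ← Finset.smul_sum]
    have hsplit : ∑ p : Fin n, (pderiv p (w δ j) - pderiv j (w δ p)) * X p
        = ∑ p : Fin n, pderiv p (w δ j) * X p - ∑ p : Fin n, pderiv j (w δ p) * X p := by
      rw [← Finset.sum_sub_distrib]
      apply Finset.sum_congr rfl
      intro p _
      rw [sub_mul]
    rw [hsplit, h1, h2, sub_neg_eq_add, ← Nat.cast_smul_eq_nsmul ℂ]
    rw [show ((δ:ℂ)) • w δ j + w δ j = ((δ:ℂ)+1) • w δ j by rw [add_smul, one_smul]]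
    rw [smul_smul, inv_mul_cancel₀ (Nat.cast_add_one_ne_zero δ), one_smul]
  refine ⟨fun p q => ∑ δ ∈ Finset.range N, cδ δ p q, ?_, ?_⟩
  · intro p q
    rw [← Finset.sum_neg_distrib]
    apply Finset.sum_congr rfl
    intro δ _
    rw [hcδ]
    rw [← smul_neg, neg_sub]
  · intro j
    have hsm2 : ∀ p ∈ Finset.univ, (∑ δ ∈ Finset.range N, cδ δ p j) * X p
        = ∑ δ ∈ Finset.range N, cδ δ p j * X p := fun p _ => Finset.sum_mul _ _ _
    rw [Finset.sum_congr rfl hsm2, Finset.sum_comm,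
      Finset.sum_congr rfl fun δ _ => hrep δ j, hsum j]




private lemma det_updateRow_finset_sum {R : Type*} [CommRing R] {m : ℕ}
    (M : Matrix (Fin m) (Fin m) R) (i : Fin m) {ι : Type*} [DecidableEq ι]
    (s : Finset ι) (w : ι → Fin m → R) :
    (M.updateRow i (∑ j ∈ s, w j)).det = ∑ j ∈ s, (M.updateRow i (w j)).det := by
  induction s using Finset.induction_on with
  | empty =>
    simp only [Finset.sum_empty]
    exact Matrix.det_eq_zero_of_row_eq_zero i fun j => by simp
  | insert _ _ hnotmem ih =>
    rw [Finset.sum_insert hnotmem, Matrix.det_updateRow_add, ih, Finset.sum_insert hnotmem]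

private lemma det_updateRow_expand {R : Type*} [CommRing R] {m : ℕ}
    (M : Matrix (Fin m) (Fin m) R) (i : Fin m) (v : Fin m → R) :
    (M.updateRow i v).det = ∑ j, v j * (M.updateRow i (Pi.single j 1)).det := by
  have hv : v = ∑ j : Fin m, v j • (Pi.single j 1 : Fin m → R) := by
    funext l
    rw [Finset.sum_apply]
    simp [Pi.single_apply, eq_comm]
  conv_lhs => rw [hv]
  rw [det_updateRow_finset_sum]
  apply Finset.sum_congr rfl
  intro j _
  simp [Matrix.det_updateRow_smul]

private lemma updateRow_updateRow {R : Type*} [CommRing R] {m : ℕ}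
    (M : Matrix (Fin m) (Fin m) R) (i : Fin m) (w w' : Fin m → R) :
    (M.updateRow i w).updateRow i w' = M.updateRow i w' := by
  ext k l
  by_cases hk : k = i
  · subst hk; simp
  · simp [Matrix.updateRow_ne hk]

private lemma pair_mem (M : Matrix (Fin n) (Fin n) (MvPolynomial (Fin n) ℂ))
    (I : Ideal (MvPolynomial (Fin n) ℂ))
    (hrows : ∀ k, ∑ l, M k l * X l ∈ I) (i p j : Fin n) :
    X p * (M.updateRow i (Pi.single j 1)).det - X j * (M.updateRow i (Pi.single p 1)).det ∈ I := by
  classical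
  have h0 : (Matrix.adjugate (M.updateRow i (Pi.single j 1))) *ᵥ
      ((M.updateRow i (Pi.single j 1)) *ᵥ (fun l => X l))
      = (M.updateRow i (Pi.single j 1)).det • (fun l => X l) := by
    rw [Matrix.mulVec_mulVec, Matrix.adjugate_mul, Matrix.smul_mulVec, Matrix.one_mulVec]
  have h1 := congrFun h0 p
  simp only [Matrix.mulVec, dotProduct, Pi.smul_apply, smul_eq_mul] at h1
  rw [← Finset.add_sum_erase _ _ (Finset.mem_univ i)] at h1
  have hAXi : ∑ l, (M.updateRow i (Pi.single j 1)) i l * X l = X j := by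
    simp [Matrix.updateRow_self, Pi.single_apply, ite_mul]
  have hadji : Matrix.adjugate (M.updateRow i (Pi.single j 1)) p i
      = (M.updateRow i (Pi.single p 1)).det := by
    rw [Matrix.adjugate_apply, updateRow_updateRow]
  rw [hAXi, hadji] at h1
  have h3 : ∀ t ∈ Finset.univ.erase i,
      Matrix.adjugate (M.updateRow i (Pi.single j 1)) p t
        * ∑ l, (M.updateRow i (Pi.single j 1)) t l * X l
      = Matrix.adjugate (M.updateRow i (Pi.single j 1)) p t * ∑ l, M t l * X l := by
    intro t ht
    simp [Matrix.updateRow_ne (Finset.ne_of_mem_erase ht)]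
  rw [Finset.sum_congr rfl h3] at h1
  have h2 : X p * (M.updateRow i (Pi.single j 1)).det
      - X j * (M.updateRow i (Pi.single p 1)).det
      = ∑ t ∈ Finset.univ.erase i,
          Matrix.adjugate (M.updateRow i (Pi.single j 1)) p t * ∑ l, M t l * X l := by
    linear_combination -h1
  rw [h2]
  exact Ideal.sum_mem _ fun t _ => Ideal.mul_mem_left _ _ (hrows t)

private lemma det_updateRow_syzrow_mem (M : Matrix (Fin n) (Fin n) (MvPolynomial (Fin n) ℂ))
    (I : Ideal (MvPolynomial (Fin n) ℂ))
    (hrows : ∀ k, ∑ l, M k l * X l ∈ I) (i : Fin n)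
    (c : Fin n → Fin n → MvPolynomial (Fin n) ℂ) (hc : ∀ p q, c p q = - c q p) :
    (M.updateRow i (fun l => ∑ p, c p l * X p)).det ∈ I := by
  rw [det_updateRow_expand]
  set C : Fin n → MvPolynomial (Fin n) ℂ := fun l => (M.updateRow i (Pi.single l 1)).det with hC
  have hexp : ∀ l ∈ Finset.univ, (∑ p, c p l * X p) * C l = ∑ p, c p l * (X p * C l) := by
    intro l _
    rw [Finset.sum_mul]
    apply Finset.sum_congr rfl
    intro p _
    ring
  rw [Finset.sum_congr rfl hexp]
  set S := ∑ l, ∑ p, c p l * (X p * C l) with hS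
  have hswap : (∑ l, ∑ p, c p l * (X l * C p)) = - S := by
    rw [Finset.sum_comm]
    have h1 : ∀ a ∈ Finset.univ, (∑ b, c a b * (X b * C a)) = ∑ b, -(c b a * (X b * C a)) := by
      intro a _
      apply Finset.sum_congr rfl
      intro b _
      rw [hc a b]
      ring
    rw [Finset.sum_congr rfl h1, hS]
    simp [Finset.sum_neg_distrib]
  have hT : ∑ l, ∑ p, c p l * (X p * C l - X l * C p) = (2:ℂ) • S := by
    have h2 : ∀ l ∈ Finset.univ, (∑ p, c p l * (X p * C l - X l * C p))
        = (∑ p, c p l * (X p * C l)) - ∑ p, c p l * (X l * C p) := by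
      intro l _
      rw [← Finset.sum_sub_distrib]
      apply Finset.sum_congr rfl
      intro p _
      ring
    rw [Finset.sum_congr rfl h2, Finset.sum_sub_distrib, ← hS, hswap, sub_neg_eq_add, two_smul]
  have hmemT : ∑ l, ∑ p, c p l * (X p * C l - X l * C p) ∈ I :=
    Ideal.sum_mem _ fun l _ => Ideal.sum_mem _ fun p _ =>
      Ideal.mul_mem_left _ _ (pair_mem M I hrows i p l)
  rw [hT] at hmemT
  have hSeq : S = (2⁻¹ : ℂ) • ((2:ℂ) • S) := by
    rw [smul_smul, inv_mul_cancel₀ two_ne_zero, one_smul]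
  rw [hSeq, smul_eq_C_mul]
  exact Ideal.mul_mem_left _ _ hmemT

private lemma det_rows_comb_zero {R : Type*} [CommRing R] {m : ℕ} (m0 : Fin m)
    (f : Fin m → Fin m → R) (hf : f m0 = 0) (h : Fin m → Fin m → R) :
    Matrix.det (Matrix.of fun i l => ∑ j, h i j * f j l) = 0 := by
  have harg : (Matrix.of fun i l => ∑ j, h i j * f j l)
      = fun i => ∑ j : Fin m, h i j • f j := by
    ext i l
    rw [Matrix.of_apply, Finset.sum_apply]
    apply Finset.sum_congr rfl
    intro j _
    rw [Pi.smul_apply, smul_eq_mul]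
  rw [show Matrix.det (Matrix.of fun i l => ∑ j, h i j * f j l)
      = Matrix.detRowAlternating (Matrix.of fun i l => ∑ j, h i j * f j l) from rfl, harg]
  have hz : ∀ r : Fin m → Fin m, Matrix.detRowAlternating (fun i => f (r i)) = (0:R) := by
    intro r
    by_cases hinj : Function.Injective r
    · have hsurj : Function.Surjective r := Finite.surjective_of_injective hinj
      obtain ⟨i0, hi0⟩ := hsurj m0
      have := (Matrix.detRowAlternating (R := R) (n := Fin m)).toMultilinearMap.map_coord_zero
        (m := fun i => f (r i)) i0 (by simp [hi0, hf])
      simpa using this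
    · obtain ⟨i1, i2, heq, hne⟩ := Function.not_injective_iff.mp hinj
      exact AlternatingMap.map_eq_zero_of_eq _ _ (by rw [heq]) hne
  have hms := (Matrix.detRowAlternating (R := R) (n := Fin m)).toMultilinearMap.map_sum
      (g := fun i j => h i j • f j)
  simp only [AlternatingMap.coe_multilinearMap] at hms
  rw [hms]
  apply Finset.sum_eq_zero
  intro r _
  have hsm := (Matrix.detRowAlternating (R := R) (n := Fin m)).toMultilinearMap.map_smul_univ
      (fun i => h i (r i)) (fun i => f (r i))
  simp only [AlternatingMap.coe_multilinearMap] at hsm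
  rw [hsm, hz r, smul_zero]




private lemma homog_mem_span_linear (a : Fin n → ℂ) (m0 : Fin n) (hm : a m0 ≠ 0)
    {φ : MvPolynomial (Fin n) ℂ} {dd : ℕ} (hφ : φ.IsHomogeneous dd)
    (h0 : eval a φ = 0) :
    φ ∈ Ideal.span (Set.range fun j => C (a m0) * X j - C (a j) * X m0) := by
  classical
  set L := Ideal.span (Set.range fun j => C (a m0) * X j - C (a j) * X m0) with hL
  set τ : MvPolynomial (Fin n) ℂ →ₐ[ℂ] MvPolynomial (Fin n) ℂ :=
    aeval (fun j => C (a j / a m0) * X m0) with hτ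
  have key : ∀ ψ, ψ - τ ψ ∈ L := by
    intro ψ
    induction ψ using MvPolynomial.induction_on with
    | C c => simp [τ, algebraMap_eq]
    | add p q hp hq =>
      rw [_root_.map_add]
      have heq : p + q - (τ p + τ q) = (p - τ p) + (q - τ q) := by ring
      rw [heq]
      exact Ideal.add_mem L hp hq
    | mul_X p j hp =>
      rw [_root_.map_mul]
      have hXj : τ (X j) = C (a j / a m0) * X m0 := by
        rw [hτ]
        simp
      rw [hXj]
      have hel : X j - C (a j / a m0) * X m0
          = C ((a m0)⁻¹) * (C (a m0) * X j - C (a j) * X m0) := by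
        rw [div_eq_mul_inv, mul_sub, ← mul_assoc, ← C_mul, inv_mul_cancel₀ hm, C_1, one_mul,
          ← mul_assoc, ← C_mul, mul_comm ((a m0)⁻¹) (a j)]
      have heq : p * X j - τ p * (C (a j / a m0) * X m0)
          = X j * (p - τ p) + τ p * (X j - C (a j / a m0) * X m0) := by ring
      rw [heq, hel]
      refine Ideal.add_mem L (Ideal.mul_mem_left L _ hp) ?_
      refine Ideal.mul_mem_left L _ (Ideal.mul_mem_left L _ ?_)
      exact Ideal.subset_span ⟨j, rfl⟩
  have hτmon : ∀ α ∈ φ.support, τ (monomial α (coeff α φ))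
      = C (coeff α φ * ∏ i ∈ α.support, (a i / a m0) ^ α i) * X m0 ^ dd := by
    intro α hα
    have hdeg' : ∑ i ∈ α.support, α i = dd := by
      have hw := hφ (mem_support_iff.mp hα)
      rw [show (∑ i ∈ α.support, α i) = α.degree from rfl, Finsupp.degree_eq_weight_one]
      exact hw
    rw [hτ]
    rw [aeval_monomial, algebraMap_eq]
    rw [Finsupp.prod]
    have hterm : ∀ i ∈ α.support, (C (a i / a m0) * X m0 : MvPolynomial (Fin n) ℂ) ^ α i
        = C ((a i / a m0) ^ α i) * X m0 ^ α i := by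
      intro i _
      rw [mul_pow, C_pow]
    rw [Finset.prod_congr rfl hterm, Finset.prod_mul_distrib, ← _root_.map_prod,
      Finset.prod_pow_eq_pow_sum, hdeg', C_mul]
    ring
  have hτφ : τ φ = C (∑ α ∈ φ.support, coeff α φ * ∏ i ∈ α.support, (a i / a m0) ^ α i)
      * X m0 ^ dd := by
    conv_lhs => rw [← support_sum_monomial_coeff φ]
    rw [_root_.map_sum, Finset.sum_congr rfl hτmon, ← Finset.sum_mul, ← _root_.map_sum]
  have heval0 : (∑ α ∈ φ.support, coeff α φ * ∏ i ∈ α.support, (a i / a m0) ^ α i) = 0 := by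
    have hterm2 : ∀ α ∈ φ.support, coeff α φ * ∏ i ∈ α.support, (a i / a m0) ^ α i
        = (coeff α φ * ∏ i ∈ α.support, a i ^ α i) * ((a m0) ^ dd)⁻¹ := by
      intro α hα
      have hdeg' : ∑ i ∈ α.support, α i = dd := by
        have hw := hφ (mem_support_iff.mp hα)
        rw [show (∑ i ∈ α.support, α i) = α.degree from rfl, Finsupp.degree_eq_weight_one]
        exact hw
      have hprod : ∏ i ∈ α.support, (a i / a m0) ^ α i
          = (∏ i ∈ α.support, a i ^ α i) / (a m0) ^ dd := by
        rw [← hdeg', ← Finset.prod_pow_eq_pow_sum, ← Finset.prod_div_distrib]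
        apply Finset.prod_congr rfl
        intro i _
        rw [div_pow]
      rw [hprod]
      field_simp
    rw [Finset.sum_congr rfl hterm2, ← Finset.sum_mul]
    rw [show (∑ α ∈ φ.support, coeff α φ * ∏ i ∈ α.support, a i ^ α i) = eval a φ from
      (eval_eq a φ).symm, h0, zero_mul]
  rw [heval0, _root_.map_zero, zero_mul] at hτφ
  have := key φ
  rw [hτφ, sub_zero] at this
  exact this


end JacobianProof

open JacobianProof

/-- If `P_1, …, P_n` are homogeneous polynomials in `n` variables whose common zero set
contains a point other than the origin, then the Jacobian determinant lies in the ideal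
generated by `P_1, …, P_n`. -/
theorem jacobian_mem_ideal_of_homogeneous_nontrivial_zero
    (n : ℕ) (hn : 0 < n) (P : Fin n → MvPolynomial (Fin n) ℂ)
    (d : Fin n → ℕ) (hhom : ∀ i, (P i).IsHomogeneous (d i))
    (hzero : ∃ x : Fin n → ℂ, x ≠ 0 ∧ ∀ i : Fin n, eval x (P i) = 0) :
    Matrix.det (Matrix.of fun i j : Fin n => pderiv j (P i)) ∈
      Ideal.span (Set.range P) := by
  classical
  obtain ⟨a, ha0, haP⟩ := hzero
  obtain ⟨m0, hm0⟩ : ∃ m0, a m0 ≠ 0 := by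
    by_contra hc
    push_neg at hc
    exact ha0 (funext fun i => hc i)
  set I : Ideal (MvPolynomial (Fin n) ℂ) := Ideal.span (Set.range P) with hI
  set f : Fin n → Fin n → MvPolynomial (Fin n) ℂ := fun j l =>
    (if l = j then C (a m0) else 0) - (if l = m0 then C (a j) else 0) with hf
  have hfX : ∀ j, ∑ l, f j l * X l = C (a m0) * X j - C (a j) * X m0 := by
    intro j
    simp only [hf, sub_mul, ite_mul, zero_mul]
    rw [Finset.sum_sub_distrib,
      Finset.sum_ite_eq' Finset.univ j (fun l => C (a m0) * X l),
      Finset.sum_ite_eq' Finset.univ m0 (fun l => C (a j) * X l)]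
    simp
  have hfm0 : f m0 = 0 := by
    funext l
    simp [hf]
  have hPL : ∀ i, P i ∈ Ideal.span (Set.range fun j => C (a m0) * X j - C (a j) * X m0) :=
    fun i => homog_mem_span_linear a m0 hm0 (hhom i) (haP i)
  have hPg : ∀ i, ∃ gg : Fin n → MvPolynomial (Fin n) ℂ,
      ∑ j, gg j * (C (a m0) * X j - C (a j) * X m0) = P i :=
    fun i => Ideal.mem_span_range_iff_exists_fun.mp (hPL i)
  choose g hg using hPg
  set u : Fin n → Fin n → MvPolynomial (Fin n) ℂ :=
    fun i l => (d i : MvPolynomial (Fin n) ℂ) * ∑ j, g i j * f j l with hu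
  set r : Fin n → Fin n → MvPolynomial (Fin n) ℂ := fun i l => pderiv l (P i) with hr
  have hrX : ∀ i, ∑ l, r i l * X l = (d i : MvPolynomial (Fin n) ℂ) * P i := by
    intro i
    simp only [hr]
    rw [euler (hhom i), nsmul_eq_mul]
  have huX : ∀ i, ∑ l, u i l * X l = (d i : MvPolynomial (Fin n) ℂ) * P i := by
    intro i
    simp only [hu]
    have h1 : ∀ l ∈ Finset.univ,
        ((d i : MvPolynomial (Fin n) ℂ) * ∑ j, g i j * f j l) * X l
        = (d i : MvPolynomial (Fin n) ℂ) * ((∑ j, g i j * f j l) * X l) :=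
      fun l _ => by ring
    rw [Finset.sum_congr rfl h1, ← Finset.mul_sum]
    congr 1
    have h2 : ∀ l ∈ Finset.univ, (∑ j, g i j * f j l) * X l
        = ∑ j, g i j * (f j l * X l) := by
      intro l _
      rw [Finset.sum_mul]
      exact Finset.sum_congr rfl fun j _ => by ring
    rw [Finset.sum_congr rfl h2, Finset.sum_comm]
    have h3 : ∀ j ∈ Finset.univ, (∑ l, g i j * (f j l * X l))
        = g i j * (C (a m0) * X j - C (a j) * X m0) := by
      intro j _
      rw [← Finset.mul_sum, hfX j]
    rw [Finset.sum_congr rfl h3, hg i]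
  have hrI : ∀ i, (d i : MvPolynomial (Fin n) ℂ) * P i ∈ I :=
    fun i => Ideal.mul_mem_left _ _ (Ideal.subset_span ⟨i, rfl⟩)
  have hKX : ∀ i, ∑ l, (r i l - u i l) * X l = 0 := by
    intro i
    have h1 : ∀ l ∈ Finset.univ, (r i l - u i l) * X l = r i l * X l - u i l * X l :=
      fun l _ => by ring
    rw [Finset.sum_congr rfl h1, Finset.sum_sub_distrib, hrX i, huX i, sub_self]
  have hsyz : ∀ i, ∃ c : Fin n → Fin n → MvPolynomial (Fin n) ℂ,
      (∀ p q, c p q = - c q p) ∧ ∀ l, r i l - u i l = ∑ p, c p l * X p :=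
    fun i => syzygy_decomp _ (hKX i)
  choose c hcanti hcrep using hsyz
  set Mt : ℕ → Matrix (Fin n) (Fin n) (MvPolynomial (Fin n) ℂ) :=
    fun t => Matrix.of fun i l => if (i : ℕ) < t then u i l else r i l with hMt
  have hrows : ∀ t k, ∑ l, Mt t k l * X l ∈ I := by
    intro t k
    by_cases hk : (k : ℕ) < t
    · simp only [hMt, Matrix.of_apply, if_pos hk]
      rw [huX k]
      exact hrI k
    · simp only [hMt, Matrix.of_apply, if_neg hk]
      rw [hrX k]
      exact hrI k
  have hstep : ∀ t : ℕ, t < n → (Mt (t+1)).det ∈ I → (Mt t).det ∈ I := by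
    intro t ht hnext
    set it : Fin n := ⟨t, ht⟩ with hit
    have hMteq : Mt t = (Mt (t+1)).updateRow it (fun l => r it l) := by
      refine Matrix.ext fun k l => ?_
      by_cases hk : k = it
      · subst hk
        rw [Matrix.updateRow_self]
        simp only [hMt, Matrix.of_apply, hit]
        rw [if_neg (by simp)]
      · rw [Matrix.updateRow_ne hk]
        simp only [hMt, Matrix.of_apply]
        have hkt : (k : ℕ) ≠ t := fun hh => hk (Fin.ext (by simp [hit, hh]))
        have hiff : ((k : ℕ) < t) ↔ ((k : ℕ) < t + 1) := by omega
        rw [if_congr hiff rfl rfl]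
    have hrdecomp : (fun l => r it l)
        = (fun l => u it l) + (fun l => ∑ p, c it p l * X p) := by
      funext l
      simp only [Pi.add_apply]
      rw [← hcrep it l]
      ring
    rw [hMteq, hrdecomp, Matrix.det_updateRow_add]
    apply Ideal.add_mem
    · have hself : (Mt (t+1)).updateRow it (fun l => u it l) = Mt (t+1) := by
        have hrow : (fun l => u it l) = Mt (t+1) it := by
          funext l
          simp only [hMt, Matrix.of_apply, hit]
          rw [if_pos (by simp)]
        rw [hrow, Matrix.updateRow_eq_self]
      rw [hself]
      exact hnext
    · exact det_updateRow_syzrow_mem (Mt (t+1)) I (hrows (t+1)) it (c it) (hcanti it)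
  have hfinal : (Mt n).det = 0 := by
    have heq : Mt n = Matrix.of fun i l =>
        ∑ j, ((d i : MvPolynomial (Fin n) ℂ) * g i j) * f j l := by
      refine Matrix.ext fun i l => ?_
      simp only [hMt, Matrix.of_apply]
      rw [if_pos i.isLt]
      simp only [hu]
      rw [Finset.mul_sum]
      exact Finset.sum_congr rfl fun j _ => by ring
    rw [heq]
    exact det_rows_comb_zero m0 f hfm0 _
  have hdesc : ∀ k, k ≤ n → (Mt (n - k)).det ∈ I := by
    intro k
    induction k with
    | zero =>
      intro _
      simp only [Nat.sub_zero]
      rw [hfinal]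
      exact I.zero_mem
    | succ k ih =>
      intro hk
      have h1 : n - (k+1) < n := by omega
      have h2 : n - (k+1) + 1 = n - k := by omega
      exact hstep (n - (k+1)) h1 (by rw [h2]; exact ih (by omega))
  have hfin0 := hdesc n (le_refl n)
  simp only [Nat.sub_self] at hfin0
  have hjac : (Matrix.of fun i j : Fin n => pderiv j (P i)) = Mt 0 := by
    refine Matrix.ext fun i l => ?_
    simp [hMt, hr]
  rw [hjac]
  exact hfin0
end

section
/- Let C > 0, let L ∈ ℂ, and let Φ : (0, ∞) → ℂ be a bounded measurable function such that Φ(ε) = 0 for all ε ≥ C and Φ(ε) → L as ε → 0⁺. Then the function λ ↦ λ · ∫₀^∞ Φ(ε) ε^{λ−1} dε (which is well defined for real λ > 0, the integral being absolutely convergent) tends to L as λ → 0⁺ along positive real values of λ. -/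
open Filter Set MeasureTheory Real

lemma mellin_subst (Φ : ℝ → ℂ) {lam : ℝ} (hlam : 0 < lam) :
    (lam : ℂ) * ∫ ε in Ioi (0 : ℝ), (ε ^ (lam - 1)) • Φ ε
      = ∫ x in Ioi (0 : ℝ), Φ (x ^ (1 / lam)) := by
  have hp : (1 / lam) ≠ 0 := by positivity
  have h := integral_comp_rpow_Ioi (fun y => (y ^ (lam - 1)) • Φ y) hp
  rw [← h]
  rw [show (∫ x in Ioi (0:ℝ), (|1/lam| * x ^ (1/lam - 1)) •
        (fun y => (y ^ (lam - 1)) • Φ y) (x ^ (1/lam)))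
      = ∫ x in Ioi (0:ℝ), (1/lam) • Φ (x ^ (1/lam)) from
    setIntegral_congr_fun measurableSet_Ioi (fun x hx => by
      have hx0 : (0 : ℝ) < x := hx
      simp only
      rw [← Real.rpow_mul hx0.le, smul_smul, abs_of_pos (by positivity : (0:ℝ) < 1/lam),
        mul_assoc, ← Real.rpow_add hx0]
      rw [show 1/lam - 1 + 1/lam * (lam - 1) = 0 by field_simp; ring, Real.rpow_zero, mul_one])]
  rw [integral_smul, Complex.real_smul, ← mul_assoc]
  push_cast
  rw [mul_one_div, div_self (by exact_mod_cast hlam.ne' : (lam:ℂ) ≠ 0), one_mul]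

/-- Abelian theorem for the normalized Mellin transform: if `Φ` is bounded, measurable,
vanishes for `ε ≥ C`, and tends to `L` as `ε → 0⁺`, then
`λ ↦ λ ∫₀^∞ Φ(ε) ε^(λ-1) dε → L` as `λ → 0⁺`. -/
theorem tendsto_mellin_of_tendsto_zero
    (C : ℝ) (hC : 0 < C) (L : ℂ) (Φ : ℝ → ℂ)
    (hmeas : Measurable Φ)
    (hbd : ∃ M : ℝ, ∀ ε : ℝ, 0 < ε → ‖Φ ε‖ ≤ M)
    (hsupp : ∀ ε : ℝ, C ≤ ε → Φ ε = 0)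
    (hlim : Tendsto Φ (nhdsWithin 0 (Ioi 0)) (nhds L)) :
    Tendsto (fun lam : ℝ => (lam : ℂ) * ∫ ε in Ioi (0 : ℝ), (ε ^ (lam - 1)) • Φ ε)
      (nhdsWithin 0 (Ioi 0)) (nhds L) := by
  obtain ⟨M, hM⟩ := hbd
  set B := max C 1 with hB
  have hB1 : (1:ℝ) ≤ B := le_max_right _ _
  have hCB : C ≤ B := le_max_left _ _
  have h1div : Tendsto (fun lam : ℝ => 1 / lam) (nhdsWithin 0 (Ioi 0)) atTop := by
    simpa only [one_div] using tendsto_inv_nhdsGT_zero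
  have hfint : (∫ x in Ioi (0:ℝ), (Ioo (0:ℝ) 1).indicator (fun _ => L) x) = L := by
    rw [setIntegral_indicator measurableSet_Ioo,
      inter_eq_self_of_subset_right Ioo_subset_Ioi_self, setIntegral_const, Real.volume_real_Ioo]
    norm_num
  have key : Tendsto (fun lam : ℝ => ∫ x in Ioi (0:ℝ), Φ (x ^ (1/lam)))
      (nhdsWithin 0 (Ioi 0)) (nhds L) := by
    rw [← hfint]
    apply tendsto_integral_filter_of_dominated_convergence
      ((Ioc (0:ℝ) B).indicator (fun _ => M))
    · filter_upwards [self_mem_nhdsWithin] with lam hlam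
      exact (hmeas.comp (continuous_rpow_const
        (one_div_nonneg.mpr (le_of_lt (mem_Ioi.mp hlam)))).measurable).aestronglyMeasurable
    · filter_upwards [Ioc_mem_nhdsGT_of_mem ⟨le_refl (0:ℝ), zero_lt_one⟩] with lam hlam
      rw [ae_restrict_iff' measurableSet_Ioi]
      filter_upwards with x hx
      by_cases hxB : x ≤ B
      · rw [indicator_of_mem (show x ∈ Ioc 0 B from ⟨hx, hxB⟩)]
        exact hM _ (rpow_pos_of_pos hx _)
      · push_neg at hxB
        rw [indicator_of_notMem (fun h => absurd h.2 (not_le.mpr hxB)),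
          hsupp _ ?_, norm_zero]
        have hx1 : (1:ℝ) ≤ x := le_trans hB1 hxB.le
        have : x = x ^ (1:ℝ) := (Real.rpow_one x).symm
        calc C ≤ B := hCB
          _ ≤ x := hxB.le
          _ = x ^ (1:ℝ) := (Real.rpow_one x).symm
          _ ≤ x ^ (1/lam) := Real.rpow_le_rpow_of_exponent_le hx1
            (by rw [le_div_iff₀ hlam.1]; simpa using hlam.2)
    · exact ((integrableOn_const measure_Ioc_lt_top.ne).integrable_indicator
        measurableSet_Ioc).restrict
    · rw [ae_restrict_iff' measurableSet_Ioi]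
      have h1 : ∀ᵐ x : ℝ, x ≠ (1:ℝ) := by
        rw [ae_iff]
        simp only [ne_eq, not_not, setOf_eq_eq_singleton]
        exact measure_singleton 1
      filter_upwards [h1] with x hx1 hx0
      rcases lt_or_gt_of_ne hx1 with hlt | hgt
      · rw [indicator_of_mem (show x ∈ Ioo 0 1 from ⟨mem_Ioi.mp hx0, hlt⟩)]
        apply hlim.comp
        apply tendsto_nhdsWithin_of_tendsto_nhds_of_eventually_within
        · exact (tendsto_rpow_atTop_of_base_lt_one x (by linarith [mem_Ioi.mp hx0]) hlt).comp h1div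
        · filter_upwards with lam
          exact rpow_pos_of_pos hx0 _
      · rw [indicator_of_notMem (fun h => absurd h.2 (not_lt.mpr hgt.le))]
        have hxt : Tendsto (fun lam : ℝ => x ^ (1/lam)) (nhdsWithin 0 (Ioi 0)) atTop := by
          have h2 : Tendsto (fun t : ℝ => x ^ t) atTop atTop := by
            simp_rw [Real.rpow_def_of_pos (lt_trans one_pos hgt)]
            exact Real.tendsto_exp_atTop.comp
              ((tendsto_const_mul_atTop_of_pos (Real.log_pos hgt)).mpr tendsto_id)
          exact h2.comp h1div
        apply Tendsto.congr' _ (tendsto_const_nhds (x := (0:ℂ)))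
        filter_upwards [hxt.eventually_ge_atTop C] with lam hlam
        exact (hsupp _ hlam).symm
  apply Tendsto.congr' _ key
  filter_upwards [self_mem_nhdsWithin] with lam hlam
  exact (mellin_subst Φ hlam).symm
end
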